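/- For a two-component link \mathcal{L} = K_1 ⊔ K_2 and any positive integer p, \check{\mathcal{R}}_p(\mathcal{L}) = 2[p]^2 (\mathcal{Z}_{(p),(p)}(K_1 ⊔ K_2) + \mathcal{Z}_{(p),(p)}(K_1 ⊔ K_2^*)), where K_2^* denotes K_2 with reversed orientation; in particular \check{\mathcal{R}}_p(\mathcal{L}) lies in 2·ℤ[(q−q^{-1})^2, t^{±1}] whenever each \mathcal{Z}_{(p),(p)} lies in [p]^{-2}ℤ[(q−q^{-1})^2, t^{±1}]. -/
import Mathlib


open Finset

/-- The two-component case of the decomposition of the reformulated composite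
invariant, plus its integrality consequence. Setup, for a fixed two-component link
`𝓛 = K₁ ⊔ K₂`:
* `K` is the coefficient field (rational functions in `q, t`), with `q t : K`;
* `C` is the skein of the annulus, containing the power-sum pattern `Pp = P_p` and
  its orientation reversal `Pstar = P_p*`;
* `B S f = ⟨𝓛_S ⋆ (f 0 ⊗ f 1)⟩` is the framed HOMFLYPT evaluation of the link
  obtained by reversing the components in `S ⊆ {0,1}` and decorating with `f`; it is
  additive in each slot (`hadd`), decorating with `Pstar` equals reversing and
  decorating with `Pp` (`hstar`), and reversing *all* orientations preserves the
  HOMFLYPT polynomial (`hcompl`);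
* `𝓩_{(p),(p)}(𝓛_S) = B S (const Pp)`, and `𝓡̌_p(𝓛) = [p]² B ∅ (const (Pp+Pstar))`
  with `[p] = q^p - q^{-p}`.
Then `𝓡̌_p(𝓛) = 2[p]² (𝓩_{(p),(p)}(K₁ ⊔ K₂) + 𝓩_{(p),(p)}(K₁ ⊔ K₂*))`; and whenever
each `𝓩_{(p),(p)}` lies in `[p]^{-2} ℤ[(q-q^{-1})², t^{±1}]`, the invariant
`𝓡̌_p(𝓛)` lies in `2·ℤ[(q-q^{-1})², t^{±1}]`. -/
theorem reformulated_composite_two_components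
    (K : Type*) [Field K] (q t : K) (p : ℕ)
    (C : Type*) [AddCommMonoid C]
    (B : Finset (Fin 2) → (Fin 2 → C) → K)
    (Pp Pstar : C)
    (hadd : ∀ (S : Finset (Fin 2)) (f : Fin 2 → C) (α : Fin 2) (x y : C),
      B S (Function.update f α (x + y)) =
        B S (Function.update f α x) + B S (Function.update f α y))
    (hstar : ∀ (S : Finset (Fin 2)) (f : Fin 2 → C) (α : Fin 2), α ∉ S →
      B S (Function.update f α Pstar) = B (insert α S) (Function.update f α Pp))
    (hcompl : ∀ (S : Finset (Fin 2)) (f : Fin 2 → C), B Sᶜ f = B S f) :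
    (q ^ p - q⁻¹ ^ p) ^ 2 * B ∅ (fun _ => Pp + Pstar) =
      2 * ((q ^ p - q⁻¹ ^ p) ^ 2 * (B ∅ (fun _ => Pp) + B {1} (fun _ => Pp))) ∧
    ((∀ S : Finset (Fin 2), (q ^ p - q⁻¹ ^ p) ^ 2 * B S (fun _ => Pp) ∈
        Subring.closure {x : K | x = (q - q⁻¹) ^ 2 ∨ x = t ∨ x = t⁻¹}) →
      ∃ x ∈ Subring.closure {x : K | x = (q - q⁻¹) ^ 2 ∨ x = t ∨ x = t⁻¹},
        (q ^ p - q⁻¹ ^ p) ^ 2 * B ∅ (fun _ => Pp + Pstar) = 2 * x) := by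
  classical
  set f : Fin 2 → C := fun _ => Pp + Pstar with hf
  -- expand slot 0
  have h0 : B ∅ f = B ∅ (Function.update f 0 Pp) + B ∅ (Function.update f 0 Pstar) := by
    have : f = Function.update f 0 (Pp + Pstar) := by
      funext i; fin_cases i <;> simp [Function.update, hf]
    rw [this, hadd]
    congr 1 <;> congr 1 <;>
      (funext i; fin_cases i <;> simp [Function.update, hf])
  -- expand slot 1 of each
  have h1 : ∀ g : Fin 2 → C, g 1 = Pp + Pstar →
      B ∅ g = B ∅ (Function.update g 1 Pp) + B ∅ (Function.update g 1 Pstar) := by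
    intro g hg
    have : g = Function.update g 1 (Pp + Pstar) := by
      funext i; fin_cases i <;> simp [Function.update, hg]
    conv_lhs => rw [this]
    rw [hadd]
  have e1 : B ∅ f = B ∅ (Function.update (Function.update f 0 Pp) 1 Pp)
      + B ∅ (Function.update (Function.update f 0 Pp) 1 Pstar)
      + (B ∅ (Function.update (Function.update f 0 Pstar) 1 Pp)
      + B ∅ (Function.update (Function.update f 0 Pstar) 1 Pstar)) := by
    rw [h0, h1 (Function.update f 0 Pp) (by simp [Function.update, hf]),
      h1 (Function.update f 0 Pstar) (by simp [Function.update, hf])]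
  -- identify functions: all-Pp function
  have hPP : ∀ a b : C, Function.update (Function.update f 0 a) 1 b
      = Function.update (Function.update f 1 b) 0 a := by
    intro a b; funext i; fin_cases i <;> simp [Function.update]
  have hconst : Function.update (Function.update f 0 Pp) 1 Pp = fun _ => Pp := by
    funext i; fin_cases i <;> simp [Function.update]
  -- convert stars
  have t1 : B ∅ (Function.update (Function.update f 0 Pp) 1 Pstar)
      = B {1} (fun _ => Pp) := by
    rw [hstar ∅ _ 1 (by simp), hconst]
    congr 1
  have t2 : B ∅ (Function.update (Function.update f 0 Pstar) 1 Pp)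
      = B {0} (fun _ => Pp) := by
    rw [hPP, hstar ∅ _ 0 (by simp), ← hPP, hconst]
    congr 1
  have t3 : B ∅ (Function.update (Function.update f 0 Pstar) 1 Pstar)
      = B {0, 1} (fun _ => Pp) := by
    rw [hstar ∅ _ 1 (by simp), hPP, hstar (insert 1 ∅) _ 0 (by decide),
      ← hPP, hconst]
    congr 1
  -- complement identities
  have c1 : B {0, 1} (fun _ : Fin 2 => Pp) = B ∅ (fun _ => Pp) := by
    have := hcompl ∅ (fun _ : Fin 2 => Pp)
    rwa [show (∅ : Finset (Fin 2))ᶜ = {0, 1} by decide] at this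
  have c2 : B {0} (fun _ : Fin 2 => Pp) = B {1} (fun _ => Pp) := by
    have := hcompl {1} (fun _ : Fin 2 => Pp)
    rwa [show ({1} : Finset (Fin 2))ᶜ = {0} by decide] at this
  have key : B ∅ f = 2 * (B ∅ (fun _ => Pp) + B {1} (fun _ => Pp)) := by
    rw [e1, hconst, t1, t2, t3, c1, c2]; ring
  constructor
  · rw [key]; ring
  · intro h
    refine ⟨(q ^ p - q⁻¹ ^ p) ^ 2 * B ∅ (fun _ => Pp)
      + (q ^ p - q⁻¹ ^ p) ^ 2 * B {1} (fun _ => Pp),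
      Subring.add_mem _ (h ∅) (h {1}), ?_⟩
    rw [key]; ring
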